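/- arXiv:1312.6194 — 2 statements merged into one kernel-verified Lean document; each statement's English description precedes it below -/
import Mathlib

section
/- Let v₁, v₂ be vectors in a finite-dimensional Euclidean space and set Wᵢ = √(1 + ‖vᵢ‖²). Then ⟨v₁ - v₂, v₁/W₁ - v₂/W₂⟩ = ((W₁ + W₂)/2) · ( ‖v₁/W₁ - v₂/W₂‖² + (1/W₁ - 1/W₂)² ). -/
open RealInnerProductSpace

theorem stmt_0 {E : Type*} [NormedAddCommGroup E] [InnerProductSpace ℝ E]
    [FiniteDimensional ℝ E] (v₁ v₂ : E) :
    ⟪v₁ - v₂, (1 / Real.sqrt (1 + ‖v₁‖ ^ 2)) • v₁ - (1 / Real.sqrt (1 + ‖v₂‖ ^ 2)) • v₂⟫ =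
      ((Real.sqrt (1 + ‖v₁‖ ^ 2) + Real.sqrt (1 + ‖v₂‖ ^ 2)) / 2) *
        (‖(1 / Real.sqrt (1 + ‖v₁‖ ^ 2)) • v₁ - (1 / Real.sqrt (1 + ‖v₂‖ ^ 2)) • v₂‖ ^ 2 +
          (1 / Real.sqrt (1 + ‖v₁‖ ^ 2) - 1 / Real.sqrt (1 + ‖v₂‖ ^ 2)) ^ 2) := by
  set W₁ := Real.sqrt (1 + ‖v₁‖ ^ 2) with hW₁def
  set W₂ := Real.sqrt (1 + ‖v₂‖ ^ 2) with hW₂def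
  have h₁ : W₁ ^ 2 = 1 + ‖v₁‖ ^ 2 := Real.sq_sqrt (by positivity)
  have h₂ : W₂ ^ 2 = 1 + ‖v₂‖ ^ 2 := Real.sq_sqrt (by positivity)
  have p₁ : 0 < W₁ := Real.sqrt_pos.2 (by positivity)
  have p₂ : 0 < W₂ := Real.sqrt_pos.2 (by positivity)
  rw [@norm_sub_sq_real]
  simp only [inner_sub_left, inner_sub_right, real_inner_smul_left, real_inner_smul_right,
    real_inner_self_eq_norm_sq, norm_smul, Real.norm_eq_abs, abs_of_pos (by positivity :
      (0:ℝ) < 1 / W₁)]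
  rw [real_inner_comm v₂ v₁]
  have habs : |1 / W₂| = 1 / W₂ := abs_of_pos (by positivity)
  rw [habs]
  have e₁ : ‖v₁‖ ^ 2 = W₁ ^ 2 - 1 := by linarith
  have e₂ : ‖v₂‖ ^ 2 = W₂ ^ 2 - 1 := by linarith
  rw [e₁, e₂]
  field_simp
  rw [e₁, e₂]
  ring
end

section
/- Let v₁, v₂ be vectors in a finite-dimensional Euclidean space and set Wᵢ = √(1 + ‖vᵢ‖²). Then ⟨v₁ - v₂, v₁/W₁ - v₂/W₂⟩ ≥ ‖v₁/W₁ - v₂/W₂‖², and in particular ⟨v₁ - v₂, v₁/W₁ - v₂/W₂⟩ ≥ 0 with equality if and only if v₁ = v₂. -/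
open RealInnerProductSpace

private lemma aux_mono (a b c₁ c₂ : ℝ) (ha : 0 ≤ a) (hb : 0 ≤ b)
    (hc1 : 0 < c₁) (hc2 : 0 < c₂)
    (h1 : c₁^2 * (1 + a^2) = 1) (h2 : c₂^2 * (1 + b^2) = 1) (hab : a ≤ b) :
    a*c₁ ≤ b*c₂ ∧ a*(1-c₁) ≤ b*(1-c₂) := by
  have hsq : c₂^2 ≤ c₁^2 := by
    nlinarith [mul_le_mul_of_nonneg_left (mul_self_le_mul_self ha hab) (sq_nonneg c₂)]
  have hc21 : c₂ ≤ c₁ := le_of_pow_le_pow_left₀ two_ne_zero hc1.le hsq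
  have s2 : (a*c₁)^2 ≤ (b*c₂)^2 := by nlinarith
  have f1 : a*c₁ ≤ b*c₂ := le_of_pow_le_pow_left₀ two_ne_zero (mul_nonneg hb hc2.le) s2
  refine ⟨f1, ?_⟩
  have key2 : a*(a*c₁)^2*(1+c₂) ≤ b*(b*c₂)^2*(1+c₁) := by
    nlinarith [mul_nonneg ha (sq_nonneg (a*c₁)), mul_nonneg hb (sq_nonneg (b*c₂)),
      mul_le_mul hab s2 (sq_nonneg (a*c₁)) hb]
  have e1 : a*(1-c₁)*((1+c₁)*(1+c₂)) = a*(a*c₁)^2*(1+c₂) := by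
    linear_combination (-(a*(1+c₂))) * h1
  have e2 : b*(1-c₂)*((1+c₁)*(1+c₂)) = b*(b*c₂)^2*(1+c₁) := by
    linear_combination (-(b*(1+c₁))) * h2
  have hpos : 0 < (1+c₁)*(1+c₂) := by positivity
  have := e1.trans_le (key2.trans_eq e2.symm)
  exact le_of_mul_le_mul_right this hpos

private lemma aux_Q (a b c₁ c₂ : ℝ) (ha : 0 ≤ a) (hb : 0 ≤ b)
    (hc1 : 0 < c₁) (hc2 : 0 < c₂)
    (h1 : c₁^2 * (1 + a^2) = 1) (h2 : c₂^2 * (1 + b^2) = 1) :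
    c₁*(1-c₁)*a^2 + c₂*(1-c₂)*b^2 - a*b*(c₁+c₂-2*c₁*c₂) ≥ 0 := by
  have key : (a*c₁ - b*c₂) * (a*(1-c₁) - b*(1-c₂)) ≥ 0 := by
    rcases le_total a b with hab | hab
    · obtain ⟨f1, f2⟩ := aux_mono a b c₁ c₂ ha hb hc1 hc2 h1 h2 hab
      have := mul_nonneg (show (0:ℝ) ≤ b*c₂ - a*c₁ by linarith)
        (show (0:ℝ) ≤ b*(1-c₂) - a*(1-c₁) by linarith)
      nlinarith [this]
    · obtain ⟨f1, f2⟩ := aux_mono b a c₂ c₁ hb ha hc2 hc1 h2 h1 hab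
      exact mul_nonneg (by linarith) (by linarith)
  nlinarith [key]

private lemma expand_P {E : Type*} [NormedAddCommGroup E] [InnerProductSpace ℝ E]
    (v₁ v₂ : E) (c₁ c₂ : ℝ) :
    ⟪v₁ - v₂, c₁ • v₁ - c₂ • v₂⟫ =
      c₁ * ‖v₁‖^2 + c₂ * ‖v₂‖^2 - (c₁ + c₂) * ⟪v₁, v₂⟫ := by
  rw [inner_sub_left, inner_sub_right, inner_sub_right, real_inner_smul_right,
    real_inner_smul_right, real_inner_smul_right, real_inner_smul_right,
    real_inner_self_eq_norm_sq, real_inner_self_eq_norm_sq, real_inner_comm v₂ v₁]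
  ring

private lemma expand_N {E : Type*} [NormedAddCommGroup E] [InnerProductSpace ℝ E]
    (v₁ v₂ : E) (c₁ c₂ : ℝ) :
    ‖c₁ • v₁ - c₂ • v₂‖ ^ 2 =
      c₁^2 * ‖v₁‖^2 + c₂^2 * ‖v₂‖^2 - 2 * c₁ * c₂ * ⟪v₁, v₂⟫ := by
  rw [@norm_sub_sq_real, norm_smul, norm_smul, real_inner_smul_left, real_inner_smul_right,
    mul_pow, mul_pow, Real.norm_eq_abs, Real.norm_eq_abs, sq_abs, sq_abs]
  ring

private lemma main_aux {E : Type*} [NormedAddCommGroup E] [InnerProductSpace ℝ E]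
    (v₁ v₂ : E) (c₁ c₂ : ℝ) (hc1 : 0 < c₁) (hc2 : 0 < c₂)
    (h1 : c₁^2 * (1 + ‖v₁‖^2) = 1) (h2 : c₂^2 * (1 + ‖v₂‖^2) = 1) :
    ⟪v₁ - v₂, c₁ • v₁ - c₂ • v₂⟫ ≥ ‖c₁ • v₁ - c₂ • v₂‖ ^ 2 ∧
      ⟪v₁ - v₂, c₁ • v₁ - c₂ • v₂⟫ ≥ 0 ∧
      (⟪v₁ - v₂, c₁ • v₁ - c₂ • v₂⟫ = 0 ↔ v₁ = v₂) := by
  have ha : 0 ≤ ‖v₁‖ := norm_nonneg _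
  have hb : 0 ≤ ‖v₂‖ := norm_nonneg _
  have ht : ⟪v₁, v₂⟫ ≤ ‖v₁‖ * ‖v₂‖ := real_inner_le_norm v₁ v₂
  have hQ := aux_Q ‖v₁‖ ‖v₂‖ c₁ c₂ ha hb hc1 hc2 h1 h2
  have hc1' : c₁ ≤ 1 := le_of_pow_le_pow_left₀ two_ne_zero zero_le_one
    (by nlinarith [sq_nonneg ‖v₁‖, sq_nonneg c₁])
  have hc2' : c₂ ≤ 1 := le_of_pow_le_pow_left₀ two_ne_zero zero_le_one
    (by nlinarith [sq_nonneg ‖v₂‖, sq_nonneg c₂])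
  have hcoef : 0 ≤ c₁ + c₂ - 2*c₁*c₂ := by
    nlinarith [mul_nonneg hc1.le (sub_nonneg.2 hc2'), mul_nonneg hc2.le (sub_nonneg.2 hc1')]
  have hmain : ⟪v₁ - v₂, c₁ • v₁ - c₂ • v₂⟫ ≥ ‖c₁ • v₁ - c₂ • v₂‖ ^ 2 := by
    rw [expand_P, expand_N]
    nlinarith [mul_nonneg (sub_nonneg.2 ht) hcoef]
  refine ⟨hmain, le_trans (by positivity) hmain, ?_, ?_⟩
  · intro h0
    have hN0 : ‖c₁ • v₁ - c₂ • v₂‖ ^ 2 = 0 := le_antisymm (h0 ▸ hmain) (by positivity)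
    have heq : c₁ • v₁ = c₂ • v₂ := by
      rw [pow_eq_zero_iff two_ne_zero, norm_eq_zero, sub_eq_zero] at hN0
      exact hN0
    have hnorm : c₁ * ‖v₁‖ = c₂ * ‖v₂‖ := by
      have := congrArg norm heq
      rwa [norm_smul, norm_smul, Real.norm_eq_abs, Real.norm_eq_abs,
        abs_of_pos hc1, abs_of_pos hc2] at this
    have hn2 : (c₁*‖v₁‖)^2 = (c₂*‖v₂‖)^2 := by rw [hnorm]
    have h : c₁^2 = c₂^2 := by linear_combination h1 - h2 - hn2
    have hcc : c₁ = c₂ := le_antisymm (le_of_pow_le_pow_left₀ two_ne_zero hc2.le h.le)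
      (le_of_pow_le_pow_left₀ two_ne_zero hc1.le h.ge)
    rw [hcc] at heq
    exact smul_right_injective E (ne_of_gt hc2) heq
  · intro h
    rw [h, sub_self, inner_zero_left]

theorem stmt_1 {E : Type*} [NormedAddCommGroup E] [InnerProductSpace ℝ E]
    [FiniteDimensional ℝ E] (v₁ v₂ : E) :
    ⟪v₁ - v₂, (1 / Real.sqrt (1 + ‖v₁‖ ^ 2)) • v₁ - (1 / Real.sqrt (1 + ‖v₂‖ ^ 2)) • v₂⟫ ≥
        ‖(1 / Real.sqrt (1 + ‖v₁‖ ^ 2)) • v₁ - (1 / Real.sqrt (1 + ‖v₂‖ ^ 2)) • v₂‖ ^ 2 ∧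
      ⟪v₁ - v₂, (1 / Real.sqrt (1 + ‖v₁‖ ^ 2)) • v₁ - (1 / Real.sqrt (1 + ‖v₂‖ ^ 2)) • v₂⟫ ≥ 0 ∧
      (⟪v₁ - v₂, (1 / Real.sqrt (1 + ‖v₁‖ ^ 2)) • v₁ - (1 / Real.sqrt (1 + ‖v₂‖ ^ 2)) • v₂⟫ = 0 ↔
        v₁ = v₂) := by
  have hW1 : 0 < Real.sqrt (1 + ‖v₁‖ ^ 2) := Real.sqrt_pos.2 (by positivity)
  have hW2 : 0 < Real.sqrt (1 + ‖v₂‖ ^ 2) := Real.sqrt_pos.2 (by positivity)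
  have h1 : (1 / Real.sqrt (1 + ‖v₁‖ ^ 2))^2 * (1 + ‖v₁‖^2) = 1 := by
    rw [div_pow, one_pow, Real.sq_sqrt (by positivity : (0:ℝ) ≤ 1 + ‖v₁‖^2)]
    field_simp
  have h2 : (1 / Real.sqrt (1 + ‖v₂‖ ^ 2))^2 * (1 + ‖v₂‖^2) = 1 := by
    rw [div_pow, one_pow, Real.sq_sqrt (by positivity : (0:ℝ) ≤ 1 + ‖v₂‖^2)]
    field_simp
  exact main_aux v₁ v₂ _ _ (by positivity) (by positivity) h1 h2
end
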